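/- Let K be a compact subset of a Banach space X and γ_n = 2^{φ(n)}. If d_n^{γ_n}(K)_X < ε/2 for some ε > 0, then ε_r(K)_X ≤ ε for every r ≥ ⌈n(φ(n) + log₂(6/ε))⌉. -/

import Mathlib

/-- `N` is a norm on `ℝ^n`. -/
def IsNorm {n : ℕ} (N : (Fin n → ℝ) → ℝ) : Prop :=
  (∀ y, N y = 0 ↔ y = 0) ∧ (∀ (a : ℝ) (y), N (a • y) = |a| * N y) ∧
    (∀ y z, N (y + z) ≤ N y + N z)

namespace IsNorm
variable {n : ℕ} {N : (Fin n → ℝ) → ℝ} (hN : IsNorm N)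
include hN

lemma zero : N 0 = 0 := (hN.1 0).2 rfl

lemma neg (y) : N (-y) = N y := by
  have := hN.2.1 (-1) y; simpa using this

lemma nonneg (y) : 0 ≤ N y := by
  have h := hN.2.2 y (-y)
  rw [add_neg_cancel, hN.zero, hN.neg] at h
  linarith

lemma sub_le (y z w) : N (y - w) ≤ N (y - z) + N (z - w) := by
  have := hN.2.2 (y - z) (z - w); simpa using this

lemma sub_comm (y z) : N (y - z) = N (z - y) := by
  rw [← hN.neg (y - z), neg_sub]

lemma le_const_mul_norm : ∃ C : ℝ, 0 ≤ C ∧ ∀ y, N y ≤ C * ‖y‖ := by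
  refine ⟨∑ i, N (Pi.single i 1), Finset.sum_nonneg fun i _ => hN.nonneg _, fun y => ?_⟩
  have hy : y = ∑ i, y i • (Pi.single i 1 : Fin n → ℝ) := by
    ext j
    simp [Finset.sum_apply, Pi.single_apply, mul_comm]
  calc N y = N (∑ i, y i • (Pi.single i 1 : Fin n → ℝ)) := by rw [← hy]
    _ ≤ ∑ i, N (y i • (Pi.single i 1 : Fin n → ℝ)) :=
        Finset.le_sum_of_subadditive N hN.zero.le hN.2.2 _ _
    _ ≤ ∑ i, ‖y‖ * N (Pi.single i 1) := by
        refine Finset.sum_le_sum fun i _ => ?_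
        rw [hN.2.1]
        exact mul_le_mul_of_nonneg_right (norm_le_pi_norm y i) (hN.nonneg _)
    _ = (∑ i, N (Pi.single i 1)) * ‖y‖ := by rw [Finset.sum_mul]; simp [mul_comm]

lemma continuous : Continuous N := by
  obtain ⟨C, hC0, hC⟩ := hN.le_const_mul_norm
  have hlip : LipschitzWith (Real.toNNReal C) N := by
    refine LipschitzWith.of_dist_le_mul fun y z => ?_
    rw [Real.dist_eq, Real.coe_toNNReal C hC0, dist_eq_norm]
    have h1 : N y - N z ≤ N (y - z) := by
      have := hN.2.2 (y - z) z; simp at this; linarith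
    have h2 : N z - N y ≤ N (y - z) := by
      have := hN.2.2 (z - y) y; simp at this
      rw [← hN.neg (y - z), neg_sub]; linarith
    have := hC (y - z)
    rw [abs_sub_le_iff]; constructor <;> linarith
  exact hlip.continuous

lemma const_mul_norm_le : ∃ c : ℝ, 0 < c ∧ ∀ y, c * ‖y‖ ≤ N y := by
  rcases Nat.eq_zero_or_pos n with hn | hn
  · refine ⟨1, one_pos, fun y => ?_⟩
    subst hn
    have : y = 0 := Subsingleton.elim _ _
    rw [this, hN.zero, norm_zero, mul_zero]
  · have hne : (Metric.sphere (0 : Fin n → ℝ) 1).Nonempty := by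
      refine ⟨Pi.single ⟨0, hn⟩ 1, ?_⟩
      simp [Pi.norm_single]
    obtain ⟨z, hz, hzmin⟩ := (isCompact_sphere (0 : Fin n → ℝ) 1).exists_isMinOn hne
      hN.continuous.continuousOn
    have hz1 : ‖z‖ = 1 := by simpa using hz
    have hzpos : 0 < N z := by
      rcases (hN.nonneg z).lt_or_eq with h | h
      · exact h
      · exfalso
        have : z = 0 := (hN.1 z).1 h.symm
        rw [this] at hz1; simp at hz1
    refine ⟨N z, hzpos, fun y => ?_⟩
    rcases eq_or_ne y 0 with rfl | hy
    · simp [hN.zero]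
    · have hyn : ‖y‖ ≠ 0 := norm_ne_zero_iff.2 hy
      have hmem : ‖y‖⁻¹ • y ∈ Metric.sphere (0 : Fin n → ℝ) 1 := by
        simp [norm_smul, abs_inv, abs_of_nonneg (norm_nonneg y), inv_mul_cancel₀ hyn]
      have hmin : N z ≤ N (‖y‖⁻¹ • y) := hzmin hmem
      have hNs : N (‖y‖⁻¹ • y) = ‖y‖⁻¹ * N y := by
        rw [hN.2.1, abs_inv, abs_of_nonneg (norm_nonneg y)]
      rw [hNs] at hmin
      have hpos : (0:ℝ) < ‖y‖ := lt_of_le_of_ne (norm_nonneg y) (Ne.symm hyn)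
      calc N z * ‖y‖ ≤ (‖y‖⁻¹ * N y) * ‖y‖ :=
            mul_le_mul_of_nonneg_right hmin (norm_nonneg y)
        _ = N y := by field_simp

end IsNorm

open MeasureTheory Pointwise ENNReal in
lemma IsNorm.sep_card {n : ℕ} {N : (Fin n → ℝ) → ℝ} (hN : IsNorm N) {δ : ℝ} (hδ : 0 < δ)
    (S : Finset (Fin n → ℝ)) (hS1 : ∀ s ∈ S, N s ≤ 1)
    (hsep : ∀ s ∈ S, ∀ s' ∈ S, s ≠ s' → δ < N (s - s')) :
    (S.card : ℝ) ≤ (1 + 2/δ) ^ n := by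
  classical
  set μ : Measure (Fin n → ℝ) := volume with hμ
  set B : ℝ → Set (Fin n → ℝ) := fun r => {y | N y ≤ r} with hB
  have hmeasB : ∀ r, MeasurableSet (B r) := fun r =>
    (isClosed_le hN.continuous continuous_const).measurableSet
  have hscale : ∀ r : ℝ, 0 < r → μ (B r) = ENNReal.ofReal (r ^ n) * μ (B 1) := by
    intro r hr
    have hset : B r = r • B 1 := by
      ext y
      rw [Set.mem_smul_set_iff_inv_smul_mem₀ hr.ne']
      simp only [hB, Set.mem_setOf_eq, hN.2.1, abs_inv, abs_of_pos hr]
      rw [inv_mul_le_iff₀ hr, mul_one]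
    rw [hset, Measure.addHaar_smul_of_nonneg μ hr.le, Module.finrank_fin_fun]
  -- positivity and finiteness of the unit ball volume
  obtain ⟨C, hC0, hC⟩ := hN.le_const_mul_norm
  obtain ⟨c, hc0, hc⟩ := hN.const_mul_norm_le
  have hvpos : 0 < μ (B 1) := by
    have hsub : Metric.ball (0 : Fin n → ℝ) (C + 1)⁻¹ ⊆ B 1 := by
      intro y hy
      simp only [Metric.mem_ball, dist_zero_right] at hy
      have := hC y
      have h1 : N y ≤ C * ‖y‖ := this
      have h2 : C * ‖y‖ ≤ (C + 1) * ‖y‖ :=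
        mul_le_mul_of_nonneg_right (by linarith) (norm_nonneg _)
      have h3 : (C + 1) * ‖y‖ ≤ (C + 1) * (C + 1)⁻¹ :=
        mul_le_mul_of_nonneg_left hy.le (by linarith)
      have h4 : (C + 1) * (C + 1)⁻¹ = 1 := mul_inv_cancel₀ (by linarith)
      simp only [hB, Set.mem_setOf_eq]; linarith
    exact lt_of_lt_of_le (Metric.measure_ball_pos μ 0 (by positivity)) (measure_mono hsub)
  have hvfin : μ (B 1) < ⊤ := by
    have hsub : B 1 ⊆ Metric.closedBall (0 : Fin n → ℝ) c⁻¹ := by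
      intro y hy
      simp only [Metric.mem_closedBall, dist_zero_right]
      have h1 : c * ‖y‖ ≤ N y := hc y
      have h2 : N y ≤ 1 := hy
      rw [← one_div, le_div_iff₀ hc0, mul_comm]; linarith
    exact lt_of_le_of_lt (measure_mono hsub) measure_closedBall_lt_top
  -- the small balls around points of S
  set f : (Fin n → ℝ) → Set (Fin n → ℝ) := fun s => {y | N (y - s) ≤ δ/2} with hf
  have hfeq : ∀ s, f s = s +ᵥ B (δ/2) := by
    intro s
    ext y
    rw [Set.mem_vadd_set_iff_neg_vadd_mem]
    simp only [hf, hB, Set.mem_setOf_eq, vadd_eq_add, neg_add_eq_sub]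
  have hfmeas : ∀ s, MeasurableSet (f s) := fun s =>
    (isClosed_le (hN.continuous.comp (continuous_id.sub continuous_const))
      continuous_const).measurableSet
  have hfvol : ∀ s, μ (f s) = μ (B (δ/2)) := by
    intro s; rw [hfeq s, measure_vadd]
  have hdisj : (S : Set (Fin n → ℝ)).PairwiseDisjoint f := by
    intro s hs s' hs' hne
    refine Set.disjoint_left.2 fun y hy hy' => ?_
    simp only [hf, Set.mem_setOf_eq] at hy hy'
    have h1 : N (s - s') ≤ N (s - y) + N (y - s') := hN.sub_le _ _ _
    rw [hN.sub_comm s y] at h1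
    have := hsep s hs s' hs' hne
    linarith
  have hsub : (⋃ s ∈ S, f s) ⊆ B (1 + δ/2) := by
    intro y hy
    simp only [Set.mem_iUnion] at hy
    obtain ⟨s, hs, hys⟩ := hy
    simp only [hf, Set.mem_setOf_eq] at hys
    have h1 : N y ≤ N (y - s) + N s := by
      have := hN.2.2 (y - s) s; simpa using this
    have := hS1 s hs
    simp only [hB, Set.mem_setOf_eq]; linarith
  have hkey : (S.card : ℝ≥0∞) * μ (B (δ/2)) ≤ μ (B (1 + δ/2)) := by
    calc (S.card : ℝ≥0∞) * μ (B (δ/2)) = ∑ s ∈ S, μ (f s) := by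
          simp [hfvol, mul_comm]
      _ = μ (⋃ s ∈ S, f s) := (measure_biUnion_finset hdisj fun s _ => hfmeas s).symm
      _ ≤ μ (B (1 + δ/2)) := measure_mono hsub
  rw [hscale (δ/2) (by positivity), hscale (1 + δ/2) (by positivity), ← mul_assoc] at hkey
  have hcancel : (S.card : ℝ≥0∞) * ENNReal.ofReal ((δ/2) ^ n)
      ≤ ENNReal.ofReal ((1 + δ/2) ^ n) :=
    (ENNReal.mul_le_mul_iff_left hvpos.ne' hvfin.ne).1 hkey
  have hreal : (S.card : ℝ) * (δ/2) ^ n ≤ (1 + δ/2) ^ n := by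
    have := hcancel
    rw [← ENNReal.ofReal_natCast, ← ENNReal.ofReal_mul (by positivity)] at this
    exact (ENNReal.ofReal_le_ofReal_iff (by positivity)).1 this
  have hpow : (0:ℝ) < (δ/2) ^ n := by positivity
  rw [← le_div_iff₀ hpow] at hreal
  calc (S.card : ℝ) ≤ (1 + δ/2) ^ n / (δ/2) ^ n := hreal
    _ = (1 + 2/δ) ^ n := by
        rw [← div_pow]
        congr 1
        field_simp
        ring

lemma IsNorm.exists_net {n : ℕ} {N : (Fin n → ℝ) → ℝ} (hN : IsNorm N) {δ : ℝ} (hδ : 0 < δ) :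
    ∃ T : Finset (Fin n → ℝ), (∀ t ∈ T, N t ≤ 1) ∧
      (∀ y, N y ≤ 1 → ∃ t ∈ T, N (y - t) ≤ δ) ∧
      (T.card : ℝ) ≤ (1 + 2/δ) ^ n := by
  classical
  set Good : Finset (Fin n → ℝ) → Prop := fun S =>
    (∀ s ∈ S, N s ≤ 1) ∧ (∀ s ∈ S, ∀ s' ∈ S, s ≠ s' → δ < N (s - s')) with hGood
  set Cs : Set ℕ := {k | ∃ S : Finset (Fin n → ℝ), Good S ∧ S.card = k} with hCs
  have h0 : (0 : ℕ) ∈ Cs := ⟨∅, ⟨by simp, by simp⟩, rfl⟩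
  have hbdd : BddAbove Cs := by
    refine ⟨⌊(1 + 2/δ) ^ n⌋₊, fun k hk => ?_⟩
    obtain ⟨S, ⟨hS1, hS2⟩, rfl⟩ := hk
    exact Nat.le_floor (hN.sep_card hδ S hS1 hS2)
  have hmem := Nat.sSup_mem ⟨0, h0⟩ hbdd
  obtain ⟨T, hTgood, hTcard⟩ := hmem
  refine ⟨T, hTgood.1, ?_, ?_⟩
  · intro y hy
    by_contra hcon
    push_neg at hcon
    have hyT : y ∉ T := by
      intro hyT
      have := hcon y hyT
      rw [sub_self, hN.zero] at this
      linarith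
    have hins : Good (insert y T) := by
      constructor
      · intro s hs
        rcases Finset.mem_insert.1 hs with rfl | hs
        · exact hy
        · exact hTgood.1 s hs
      · intro s hs s' hs' hne
        rcases Finset.mem_insert.1 hs with h1 | h1
        · rcases Finset.mem_insert.1 hs' with h2 | h2
          · exact absurd (h1.trans h2.symm) hne
          · rw [h1]; exact hcon s' h2
        · rcases Finset.mem_insert.1 hs' with h2 | h2
          · rw [h2, hN.sub_comm]; exact hcon s h1
          · exact hTgood.2 s h1 s' h2 hne
    have : T.card + 1 ∈ Cs := ⟨insert y T, hins, by rw [Finset.card_insert_of_notMem hyT]⟩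
    have hle := le_csSup hbdd this
    rw [← hTcard] at hle
    omega
  · exact hN.sep_card hδ T hTgood.1 hTgood.2

variable {X : Type*} [NormedAddCommGroup X] [NormedSpace ℝ X] [CompleteSpace X]

/-- The fixed Lipschitz width `d^γ(K, Y_n)_X` for the norm `N` on `ℝ^n`. -/
noncomputable def fixedLipWidth {n : ℕ} (K : Set X) (N : (Fin n → ℝ) → ℝ) (γ : ℝ) : ℝ :=
  ⨅ L : {L : (Fin n → ℝ) → X //
      ∀ y y', N y ≤ 1 → N y' ≤ 1 → ‖L y - L y'‖ ≤ γ * N (y - y')},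
    ⨆ f : K, ⨅ y : {y : Fin n → ℝ // N y ≤ 1}, ‖(f : X) - L.1 y.1‖

/-- The Lipschitz width `d_n^γ(K)_X`. -/
noncomputable def lipWidth (K : Set X) (n : ℕ) (γ : ℝ) : ℝ :=
  ⨅ N : {N : (Fin n → ℝ) → ℝ // IsNorm N}, fixedLipWidth K N.1 γ

/-- The entropy number `ε_n(K)_X`. -/
noncomputable def entropyNum (K : Set X) (n : ℕ) : ℝ :=
  sInf {ε : ℝ | 0 < ε ∧ ∃ g : Fin (2 ^ n) → X, K ⊆ ⋃ j, Metric.closedBall (g j) ε}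

/-- The Chebyshev radius of `K`. -/
noncomputable def chebRad (K : Set X) : ℝ :=
  ⨅ g : X, ⨆ f : K, ‖g - (f : X)‖

/-- if `d_n^{2^{φ(n)}}(K)_X < ε/2` then `ε_r(K)_X ≤ ε` for every
`r ≥ ⌈n(φ(n) + log₂(6/ε))⌉`. -/
theorem entropy_le_of_lipWidth_lt (K : Set X) (hK : IsCompact K)
    (φ : ℕ → ℝ) (n : ℕ) (ε : ℝ) (hε : 0 < ε)
    (h : lipWidth K n ((2 : ℝ) ^ φ n) < ε / 2) :
    ∀ r : ℕ, ⌈(n : ℝ) * (φ n + Real.logb 2 (6 / ε))⌉₊ ≤ r → entropyNum K r ≤ ε := by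
  classical
  intro r hr
  set γ : ℝ := (2 : ℝ) ^ φ n with hγdef
  have hγpos : 0 < γ := Real.rpow_pos_of_pos two_pos _
  -- extract a norm N
  haveI hNne : Nonempty {N : (Fin n → ℝ) → ℝ // IsNorm N} :=
    ⟨⟨fun y => ‖y‖, ⟨fun y => norm_eq_zero, fun a y => by
      show ‖a • y‖ = |a| * ‖y‖
      rw [norm_smul, Real.norm_eq_abs], fun y z => norm_add_le y z⟩⟩⟩
  have h' : (⨅ N : {N : (Fin n → ℝ) → ℝ // IsNorm N}, fixedLipWidth K N.1 γ) < ε / 2 := h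
  obtain ⟨⟨N, hN⟩, hNlt⟩ := exists_lt_of_ciInf_lt h'
  -- extract a Lipschitz map L
  haveI hLne : Nonempty {L : (Fin n → ℝ) → X //
      ∀ y y', N y ≤ 1 → N y' ≤ 1 → ‖L y - L y'‖ ≤ γ * N (y - y')} :=
    ⟨⟨fun _ => (0 : X), fun y y' _ _ => by
      simp only [sub_self, norm_zero]
      exact mul_nonneg hγpos.le (hN.nonneg _)⟩⟩
  have h'' : (⨅ L : {L : (Fin n → ℝ) → X //
      ∀ y y', N y ≤ 1 → N y' ≤ 1 → ‖L y - L y'‖ ≤ γ * N (y - y')},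
      ⨆ f : K, ⨅ y : {y : Fin n → ℝ // N y ≤ 1}, ‖(f : X) - L.1 y.1‖) < ε / 2 := hNlt
  obtain ⟨⟨L, hL⟩, hLlt⟩ := exists_lt_of_ciInf_lt h''
  haveI hballne : Nonempty {y : Fin n → ℝ // N y ≤ 1} :=
    ⟨⟨0, by rw [hN.zero]; norm_num⟩⟩
  -- approximation of each element of K
  obtain ⟨C, hC⟩ := hK.isBounded.exists_norm_le
  have hKapprox : ∀ f ∈ K, ∃ y : Fin n → ℝ, N y ≤ 1 ∧ ‖f - L y‖ < ε / 2 := by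
    intro f hf
    have hbddb : ∀ f' : K, BddBelow (Set.range fun y : {y : Fin n → ℝ // N y ≤ 1} =>
        ‖(f' : X) - L y.1‖) := fun f' => ⟨0, by rintro x ⟨y, rfl⟩; exact norm_nonneg _⟩
    have hbdd : BddAbove (Set.range fun f' : K =>
        ⨅ y : {y : Fin n → ℝ // N y ≤ 1}, ‖(f' : X) - L y.1‖) := by
      refine ⟨C + ‖L 0‖, ?_⟩
      rintro x ⟨f', rfl⟩
      have h1 : (⨅ y : {y : Fin n → ℝ // N y ≤ 1}, ‖(f' : X) - L y.1‖)
          ≤ ‖(f' : X) - L 0‖ := ciInf_le (hbddb f') ⟨0, by rw [hN.zero]; norm_num⟩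
      have h2 : ‖(f' : X) - L 0‖ ≤ ‖(f' : X)‖ + ‖L 0‖ := norm_sub_le _ _
      have h3 : ‖(f' : X)‖ ≤ C := hC _ f'.2
      linarith
    have hsup : (⨅ y : {y : Fin n → ℝ // N y ≤ 1}, ‖(f : X) - L y.1‖) < ε / 2 :=
      lt_of_le_of_lt (le_ciSup hbdd (⟨f, hf⟩ : K)) hLlt
    obtain ⟨⟨y, hy⟩, hylt⟩ := exists_lt_of_ciInf_lt hsup
    exact ⟨y, hy, hylt⟩
  -- construct the net
  set δ : ℝ := ε / (2 * γ) with hδdef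
  have hδpos : 0 < δ := by positivity
  have hγδ : γ * δ = ε / 2 := by
    rw [hδdef]; field_simp
  obtain ⟨T, hT1, hTnet, hTcard⟩ :
      ∃ T : Finset (Fin n → ℝ), (∀ t ∈ T, N t ≤ 1) ∧
        (∀ y, N y ≤ 1 → ∃ t ∈ T, N (y - t) ≤ δ) ∧ T.card ≤ 2 ^ r := by
    rcases le_or_gt 1 δ with hδ1 | hδ1
    · refine ⟨{0}, ?_, ?_, ?_⟩
      · intro t ht
        rw [Finset.mem_singleton] at ht
        rw [ht, hN.zero]; norm_num
      · intro y hy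
        exact ⟨0, Finset.mem_singleton_self 0, by rw [sub_zero]; linarith⟩
      · rw [Finset.card_singleton]
        exact Nat.one_le_two_pow
    · obtain ⟨T, hT1, hTnet, hTcard⟩ := hN.exists_net hδpos
      refine ⟨T, hT1, hTnet, ?_⟩
      -- cardinality arithmetic
      have h3δ : (1 + 2 / δ : ℝ) ≤ 3 / δ := by
        rw [le_div_iff₀ hδpos, add_mul, div_mul_cancel₀ _ hδpos.ne']
        linarith
      have h6 : (3 : ℝ) / δ = 6 * γ / ε := by
        rw [hδdef]; field_simp; ring
      have hxpos : (0 : ℝ) < 6 * γ / ε := by positivity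
      have hlogb : Real.logb 2 (6 * γ / ε) = φ n + Real.logb 2 (6 / ε) := by
        have : (6 : ℝ) * γ / ε = γ * (6 / ε) := by ring
        rw [this, Real.logb_mul hγpos.ne' (by positivity), hγdef,
          Real.logb_rpow two_pos (by norm_num)]
      have hexp : ((6 * γ / ε : ℝ)) ^ n ≤ (2 : ℝ) ^ r := by
        have h1 : ((6 * γ / ε : ℝ)) ^ n
            = (2 : ℝ) ^ (Real.logb 2 (6 * γ / ε) * n) := by
          rw [← Real.rpow_natCast ((6 * γ / ε : ℝ)) n,
            ← Real.rpow_logb two_pos (by norm_num) hxpos, ← Real.rpow_mul (by norm_num)]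
          rw [Real.logb_rpow two_pos (by norm_num)]
        have h2 : Real.logb 2 (6 * γ / ε) * n ≤ (r : ℝ) := by
          rw [hlogb, mul_comm]
          calc (n : ℝ) * (φ n + Real.logb 2 (6 / ε))
              ≤ (⌈(n : ℝ) * (φ n + Real.logb 2 (6 / ε))⌉₊ : ℝ) := Nat.le_ceil _
            _ ≤ (r : ℝ) := Nat.cast_le.2 hr
        rw [h1, ← Real.rpow_natCast (2 : ℝ) r]
        exact Real.rpow_le_rpow_of_exponent_le (by norm_num) h2
      have hfinal : (T.card : ℝ) ≤ ((2 ^ r : ℕ) : ℝ) := by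
        push_cast
        calc (T.card : ℝ) ≤ (1 + 2 / δ) ^ n := hTcard
          _ ≤ (3 / δ) ^ n := pow_le_pow_left₀ (by positivity) h3δ n
          _ = (6 * γ / ε) ^ n := by rw [h6]
          _ ≤ (2 : ℝ) ^ r := hexp
      exact_mod_cast hfinal
  -- build the covering map
  set e := T.equivFin with he
  set g : Fin (2 ^ r) → X := fun j =>
    if hj : (j : ℕ) < T.card then L ((e.symm ⟨j, hj⟩ : Fin n → ℝ)) else 0 with hg
  have hcover : K ⊆ ⋃ j, Metric.closedBall (g j) ε := by
    intro f hf
    obtain ⟨y, hy, hfy⟩ := hKapprox f hf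
    obtain ⟨t, ht, hyt⟩ := hTnet y hy
    set idx : Fin T.card := e ⟨t, ht⟩ with hidx
    refine Set.mem_iUnion.2 ⟨⟨(idx : ℕ), lt_of_lt_of_le idx.isLt hTcard⟩, ?_⟩
    have hjlt : ((⟨(idx : ℕ), lt_of_lt_of_le idx.isLt hTcard⟩ : Fin (2 ^ r)) : ℕ) < T.card :=
      idx.isLt
    have hgj : g ⟨(idx : ℕ), lt_of_lt_of_le idx.isLt hTcard⟩ = L t := by
      rw [hg]
      simp only [dif_pos hjlt]
      congr 1
      have h1 : (⟨(idx : ℕ), hjlt⟩ : Fin T.card) = idx := rfl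
      rw [h1, hidx, Equiv.symm_apply_apply]
    rw [Metric.mem_closedBall, dist_eq_norm, hgj]
    have h1 : ‖f - L t‖ ≤ ‖f - L y‖ + ‖L y - L t‖ := by
      have := norm_add_le (f - L y) (L y - L t)
      simpa using this
    have h2 : ‖L y - L t‖ ≤ γ * N (y - t) := hL y t hy (hT1 t ht)
    have h3 : γ * N (y - t) ≤ γ * δ := mul_le_mul_of_nonneg_left hyt hγpos.le
    rw [hγδ] at h3
    linarith
  exact csInf_le ⟨0, fun x hx => hx.1.le⟩ ⟨hε, g, hcover⟩
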